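/- For every r ≥ 1, the map c_4 : F_q → F_2^{q/2} sending a to (tr(a·(b+γ_0)^{-1}), ..., tr(a·(b+γ_{q/2−1})^{-1})) is an injective F_2-linear (additive) map, and its image is exactly the dual code C_4^⊥ = {w ∈ F_2^{q/2} : Σ_l w_l·u_l = 0 in F_2 for all u ∈ C_4}. In particular C_4^⊥ has exactly q elements. -/

import Mathlib

open Finset

/-- The trace map `tr : F_q → F_2 ⊆ F_q`, `tr x = x + x² + ⋯ + x^(2^(r-1))`. -/
def trF {F : Type*} [Field F] (r : ℕ) (x : F) : F :=
  ∑ i ∈ Finset.range r, x ^ (2 ^ i)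

/-- The trace map with values in `F_2 = ZMod 2` (the value of `trF` is always `0` or `1`). -/
def tr2 {F : Type*} [Field F] [DecidableEq F] (r : ℕ) (x : F) : ZMod 2 :=
  if trF r x = 0 then 0 else 1

/-- The binary linear code `C = {u ∈ F_2^n : ∑_l u_l·v_l = 0 in F_q}`, where `u_l ∈ F_2`
acts on `F_q` through the inclusion `F_2 ⊆ F_q`. -/
def codeSet {F : Type*} [Field F] {n : ℕ} (v : Fin n → F) : Set (Fin n → ZMod 2) :=
  {u | ∑ l, (u l).val • v l = 0}

/-- The dual code `C^⊥ = {w ∈ F_2^n : ∑_l w_l·u_l = 0 in F_2 for all u ∈ C}`. -/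
def dualSet {F : Type*} [Field F] {n : ℕ} (v : Fin n → F) : Set (Fin n → ZMod 2) :=
  {w | ∀ u ∈ codeSet v, ∑ l, w l * u l = 0}

/-- The vector `(g_1⁻¹, …, g_m⁻¹) ∈ F_q^m`. -/
def invVec {F : Type*} [Field F] {m : ℕ} (g : Fin m → F) : Fin m → F :=
  fun l => (g l)⁻¹

/-- The codeword map `a ↦ (tr(a·v_1), …, tr(a·v_n)) ∈ F_2^n`. -/
def cw {F : Type*} [Field F] [DecidableEq F] (r : ℕ) {n : ℕ} (v : Fin n → F) (a : F) :
    Fin n → ZMod 2 :=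
  fun l => tr2 r (a * v l)

section Aux
open Polynomial
variable {F : Type*} [Field F]

variable {F : Type*} [Field F]

lemma trF_zero (r : ℕ) : trF r (0 : F) = 0 := by
  unfold trF
  exact Finset.sum_eq_zero fun i _ => zero_pow (Nat.two_pow_pos i).ne'

lemma trF_add [CharP F 2] (r : ℕ) (x y : F) : trF r (x + y) = trF r x + trF r y := by
  haveI : Fact (Nat.Prime 2) := ⟨Nat.prime_two⟩
  unfold trF
  rw [← Finset.sum_add_distrib]
  exact Finset.sum_congr rfl fun i _ => add_pow_char_pow x y 2 i

lemma trF_sq [Fintype F] [CharP F 2] {r : ℕ} (hF : Fintype.card F = 2 ^ r) (x : F) :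
    trF r (x ^ 2) = trF r x := by
  have h1 : trF r (x ^ 2) + x = trF r x + x ^ 2 ^ r := by
    have : ∀ i, (x ^ 2) ^ 2 ^ i = x ^ 2 ^ (i + 1) := by
      intro i
      rw [← pow_mul, pow_succ, mul_comm (2 ^ i) 2]
    calc trF r (x ^ 2) + x = ∑ i ∈ Finset.range r, x ^ 2 ^ (i + 1) + x ^ 2 ^ 0 := by
          simp [trF, this]
      _ = ∑ i ∈ Finset.range (r + 1), x ^ 2 ^ i := (Finset.sum_range_succ' (fun i => x ^ 2 ^ i) r).symm
      _ = trF r x + x ^ 2 ^ r := Finset.sum_range_succ _ r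
  have h2 : x ^ 2 ^ r = x := by rw [← hF]; exact FiniteField.pow_card x
  rw [h2] at h1
  have := add_right_cancel h1
  exact this

lemma trF_mem [Fintype F] [CharP F 2] {r : ℕ} (hF : Fintype.card F = 2 ^ r) (x : F) :
    trF r x = 0 ∨ trF r x = 1 := by
  have hsq : (trF r x) ^ 2 = trF r x := by
    have : (trF r x) ^ 2 = trF r (x ^ 2) := by
      unfold trF
      rw [sum_pow_char]
      exact Finset.sum_congr rfl fun i _ => by rw [← pow_mul, ← pow_mul, mul_comm]
    rw [this, trF_sq hF]
  have : trF r x * (trF r x - 1) = 0 := by linear_combination hsq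
  rcases mul_eq_zero.mp this with h | h
  · exact Or.inl h
  · exact Or.inr (sub_eq_zero.mp h)

lemma tr2_zero [DecidableEq F] (r : ℕ) : tr2 r (0 : F) = 0 := by simp [tr2, trF_zero]

lemma tr2_eq_zero_iff [DecidableEq F] (r : ℕ) (x : F) : tr2 r x = 0 ↔ trF r x = 0 := by
  by_cases h : trF r x = 0 <;> simp [tr2, h]

lemma tr2_add [Fintype F] [DecidableEq F] [CharP F 2] {r : ℕ} (hF : Fintype.card F = 2 ^ r)
    (x y : F) : tr2 r (x + y) = tr2 r x + tr2 r y := by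
  have h2 : (1 : F) + 1 = 0 := CharTwo.add_self_eq_zero 1
  rcases trF_mem hF x with hx | hx <;> rcases trF_mem hF y with hy | hy <;>
    simp [tr2, trF_add, hx, hy, h2, one_ne_zero, (by decide : (1:ZMod 2)+1 = 0)]

end Aux

lemma trF_eq_zero_iff_mem {F : Type*} [Field F] [Fintype F] [DecidableEq F] [CharP F 2]
    {r : ℕ} (hr : 1 ≤ r) (hF : Fintype.card F = 2 ^ r)
    (γ : Fin (2 ^ (r - 1)) → F) (hγinj : Function.Injective γ)
    (hγran : Set.range γ = {β : F | ∃ α : F, β = α ^ 2 + α}) (β : F) :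
    trF r β = 0 ↔ ∃ α : F, β = α ^ 2 + α := by
  classical
  set P : Polynomial F := ∑ i ∈ Finset.range r, Polynomial.X ^ (2 ^ i) with hP
  have heval : ∀ x : F, P.eval x = trF r x := by
    intro x; simp [hP, trF, Polynomial.eval_finset_sum]
  have hcoeff : P.coeff 1 = 1 := by
    simp only [hP, Polynomial.finset_sum_coeff, Polynomial.coeff_X_pow]
    rw [Finset.sum_eq_single 0]
    · simp
    · intro i hi hne
      have h1 : (1 : ℕ) < 2 ^ i := Nat.one_lt_two_pow_iff.mpr hne
      simp [Nat.ne_of_lt h1]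
    · intro h; exact absurd (Finset.mem_range.mpr hr) h
  have hne : P ≠ 0 := fun h => by simp [h] at hcoeff
  have hdeg : P.natDegree ≤ 2 ^ (r - 1) := by
    apply Polynomial.natDegree_sum_le_of_forall_le
    intro i hi
    rw [Polynomial.natDegree_X_pow]
    exact Nat.pow_le_pow_right (by norm_num) (by have := Finset.mem_range.mp hi; omega)
  set K : Finset F := Finset.univ.filter fun x : F => trF r x = 0 with hK
  have hKsub : K ⊆ P.roots.toFinset := by
    intro x hx
    refine Multiset.mem_toFinset.mpr ((Polynomial.mem_roots hne).mpr ?_)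
    have hx0 := (Finset.mem_filter.mp hx).2
    show P.eval x = 0
    rw [heval]; exact hx0
  have hKcard : K.card ≤ 2 ^ (r - 1) :=
    le_trans (Finset.card_le_card hKsub)
      (le_trans (Multiset.toFinset_card_le _) (le_trans (Polynomial.card_roots' P) hdeg))
  set T : Finset F := Finset.image γ Finset.univ with hT
  have hTcard : T.card = 2 ^ (r - 1) := by
    rw [hT, Finset.card_image_of_injective _ hγinj, Finset.card_univ, Fintype.card_fin]
  have hTK : T ⊆ K := by
    intro x hx
    obtain ⟨i, _, rfl⟩ := Finset.mem_image.mp hx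
    have hmem : γ i ∈ Set.range γ := ⟨i, rfl⟩
    rw [hγran] at hmem
    obtain ⟨α, hα⟩ := hmem
    refine Finset.mem_filter.mpr ⟨Finset.mem_univ _, ?_⟩
    rw [hα, trF_add, trF_sq hF, CharTwo.add_self_eq_zero]
  have hKT : T = K := Finset.eq_of_subset_of_card_le hTK (le_trans hKcard hTcard.ge)
  constructor
  · intro h
    have hβK : β ∈ K := Finset.mem_filter.mpr ⟨Finset.mem_univ _, h⟩
    rw [← hKT] at hβK
    obtain ⟨i, _, hi⟩ := Finset.mem_image.mp hβK
    have : β ∈ Set.range γ := ⟨i, hi⟩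
    rw [hγran] at this
    exact this
  · rintro ⟨α, rfl⟩
    rw [trF_add, trF_sq hF, CharTwo.add_self_eq_zero]

/-- For every `r ≥ 1`, the map `c_4 : F_q → F_2^(q/2)`,
`a ↦ (tr(a·(b+γ_0)⁻¹), …, tr(a·(b+γ_{q/2−1})⁻¹))`,
where `b ∈ F_q \ Θ(F_q)` and `γ_0 = 0, γ_1, …, γ_{q/2−1}` enumerate the elements of
`Θ(F_q) = {α² + α : α ∈ F_q}`, is an injective `F_2`-linear (additive) map whose image is
exactly the dual code `C_4^⊥`; in particular `C_4^⊥` has exactly `q` elements. -/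
theorem c4_injective_additive_range_eq_dual {F : Type*} [Field F] [Fintype F] [DecidableEq F]
    (r : ℕ) (hr : 1 ≤ r) (hF : Fintype.card F = 2 ^ r)
    (b : F) (hb : ∀ α : F, α ^ 2 + α ≠ b)
    (γ : Fin (2 ^ (r - 1)) → F) (hγinj : Function.Injective γ)
    (hγran : Set.range γ = {β : F | ∃ α : F, β = α ^ 2 + α}) :
    Function.Injective (cw r (invVec (fun i => b + γ i))) ∧
    (∀ a a' : F, cw r (invVec (fun i => b + γ i)) (a + a')
        = cw r (invVec (fun i => b + γ i)) a + cw r (invVec (fun i => b + γ i)) a') ∧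
    Set.range (cw r (invVec (fun i => b + γ i))) = dualSet (invVec (fun i => b + γ i)) ∧
    Nat.card (dualSet (invVec (fun i => b + γ i))) = 2 ^ r := by
  classical
  haveI hp2 : Fact (Nat.Prime 2) := ⟨Nat.prime_two⟩
  haveI hchar : CharP F 2 := by
    obtain ⟨p, hpc⟩ := CharP.exists F
    haveI := hpc
    obtain ⟨m, hpprime, hcard⟩ := FiniteField.card F p
    have h1 : p ∣ 2 ^ r := by
      rw [← hF, hcard]
      exact dvd_pow_self p (by positivity)
    have h2 : p = 2 :=
      (Nat.prime_dvd_prime_iff_eq hpprime Nat.prime_two).mp (hpprime.dvd_of_dvd_pow h1)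
    exact h2 ▸ hpc
  set v : Fin (2 ^ (r - 1)) → F := invVec (fun i => b + γ i) with hv
  have hθ : ∀ β : F, trF r β = 0 ↔ ∃ α : F, β = α ^ 2 + α :=
    trF_eq_zero_iff_mem hr hF γ hγinj hγran
  have htrb : trF r b ≠ 0 := fun h => by
    obtain ⟨α, hα⟩ := (hθ b).mp h
    exact hb α hα.symm
  have hγtr : ∀ i, trF r (γ i) = 0 := by
    intro i
    apply (hθ _).mpr
    have : γ i ∈ Set.range γ := ⟨i, rfl⟩
    rw [hγran] at this
    exact this
  have hgne : ∀ i, b + γ i ≠ 0 := by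
    intro i h
    have h1 : trF r (b + γ i) = trF r b := by rw [trF_add, hγtr, add_zero]
    rw [h, trF_zero] at h1
    exact htrb h1.symm
  have hvne : ∀ i, v i ≠ 0 := fun i => inv_ne_zero (hgne i)
  have hvinj : Function.Injective v := by
    intro i j h
    exact hγinj (add_left_cancel (inv_injective h : b + γ i = b + γ j))
  have htr2v : ∀ z : F, trF r z = 1 → tr2 r z = 1 := by
    intro z hz; simp [tr2, hz]
  have htr_eq : ∀ x y : F, tr2 r x = tr2 r y → trF r x = trF r y := by
    intro x y h
    rcases trF_mem hF x with hx | hx <;> rcases trF_mem hF y with hy | hy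
    · rw [hx, hy]
    · rw [(tr2_eq_zero_iff r x).mpr hx, htr2v y hy] at h; exact absurd h zero_ne_one
    · rw [htr2v x hx, (tr2_eq_zero_iff r y).mpr hy] at h; exact absurd h one_ne_zero
    · rw [hx, hy]
  -- injectivity
  have hinj : Function.Injective (cw r v) := by
    intro a a' hcw
    by_contra hne
    set d := a + a' with hd
    have hdne : d ≠ 0 := by
      intro h0
      apply hne
      rw [hd] at h0
      have h1 := congrArg (· + a') h0
      simpa [add_assoc, CharTwo.add_self_eq_zero] using h1
    have hdtr : ∀ l, trF r (d * v l) = 0 := by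
      intro l
      have h2 : trF r (a * v l) = trF r (a' * v l) := htr_eq _ _ (congrFun hcw l)
      have h3 : d * v l = a * v l + a' * v l := by rw [hd, add_mul]
      rw [h3, trF_add, h2, CharTwo.add_self_eq_zero]
    set K : Finset F := Finset.univ.filter fun x : F => trF r x = 0 with hK
    have hKcard : K.card = 2 ^ (r - 1) := by
      have hKim : K = Finset.image γ Finset.univ := by
        ext x
        constructor
        · intro hx
          have hx2 : trF r x = 0 := (Finset.mem_filter.mp hx).2
          have hx' : x ∈ Set.range γ := by rw [hγran]; exact (hθ x).mp hx2
          obtain ⟨i, hi⟩ := hx'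
          exact Finset.mem_image.mpr ⟨i, Finset.mem_univ i, hi⟩
        · intro hx
          obtain ⟨i, _, rfl⟩ := Finset.mem_image.mp hx
          refine Finset.mem_filter.mpr ⟨Finset.mem_univ _, (hθ _).mpr ?_⟩
          have : γ i ∈ Set.range γ := ⟨i, rfl⟩
          rwa [hγran] at this
      rw [hKim, Finset.card_image_of_injective _ hγinj, Finset.card_univ, Fintype.card_fin]
    have h0K : (0 : F) ∈ K := Finset.mem_filter.mpr ⟨Finset.mem_univ _, trF_zero r⟩
    set S : Finset F := Finset.image (fun l => d * v l) Finset.univ with hS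
    have hScard : S.card = 2 ^ (r - 1) := by
      rw [hS, Finset.card_image_of_injective _
        (fun l1 l2 h => hvinj (mul_left_cancel₀ hdne h)), Finset.card_univ, Fintype.card_fin]
    have hSsub : S ⊆ K.erase 0 := by
      intro x hx
      obtain ⟨l, _, rfl⟩ := Finset.mem_image.mp hx
      exact Finset.mem_erase.mpr ⟨mul_ne_zero hdne (hvne l),
        Finset.mem_filter.mpr ⟨Finset.mem_univ _, hdtr l⟩⟩
    have hle := Finset.card_le_card hSsub
    rw [hScard, Finset.card_erase_of_mem h0K, hKcard] at hle
    have hpos : 0 < 2 ^ (r - 1) := Nat.pow_pos two_pos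
    omega
  -- additivity
  have hadd : ∀ a a' : F, cw r v (a + a') = cw r v a + cw r v a' := by
    intro a a'
    funext l
    show tr2 r ((a + a') * v l) = tr2 r (a * v l) + tr2 r (a' * v l)
    rw [add_mul, tr2_add hF]
  -- range ⊆ dual
  let T2 : F →+ ZMod 2 := AddMonoidHom.mk' (tr2 r) (tr2_add hF)
  have hT2 : ∀ x : F, T2 x = tr2 r x := fun x => rfl
  have hsub1 : Set.range (cw r v) ⊆ dualSet v := by
    rintro w ⟨a, rfl⟩ u hu
    have hcode : ∑ l, (u l).val • v l = 0 := hu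
    have hz : ∀ c : ZMod 2, c = 0 ∨ c = 1 := by
      intro c
      fin_cases c
      · exact Or.inl rfl
      · exact Or.inr rfl
    have key : ∀ l, cw r v a l * u l = T2 ((u l).val • (a * v l)) := by
      intro l
      rcases hz (u l) with h | h <;> rw [h]
      · simp [hT2, tr2_zero]
      · simp [hT2, ZMod.val_one, cw]
    calc ∑ l, cw r v a l * u l
        = ∑ l, T2 ((u l).val • (a * v l)) := Finset.sum_congr rfl fun l _ => key l
      _ = T2 (∑ l, (u l).val • (a * v l)) := (map_sum T2 _ _).symm
      _ = 0 := by
          have hsum : ∑ l, (u l).val • (a * v l) = a * ∑ l, (u l).val • v l := by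
            rw [Finset.mul_sum]
            exact Finset.sum_congr rfl fun l _ => (mul_smul_comm _ _ _).symm
          rw [hsum, hcode, mul_zero, map_zero]
  -- counting
  let χ : ZMod 2 →+* F := ZMod.castHom (dvd_refl 2) F
  letI : Module (ZMod 2) F := Module.compHom F χ
  let ψ : (Fin (2 ^ (r - 1)) → ZMod 2) →ₗ[ZMod 2] F :=
    { toFun := fun u => ∑ l, χ (u l) * v l
      map_add' := by intro u u'; simp [add_mul, Finset.sum_add_distrib]
      map_smul' := by
        intro c u
        simp only [Pi.smul_apply, smul_eq_mul, map_mul, RingHom.id_apply, mul_assoc,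
          ← Finset.mul_sum]
        rfl }
  have hψmem : ∀ u : Fin (2 ^ (r - 1)) → ZMod 2, u ∈ codeSet v ↔ ψ u = 0 := by
    intro u
    have hterm : ∀ l, (u l).val • v l = χ (u l) * v l := by
      intro l
      rw [nsmul_eq_mul, ZMod.natCast_val, ZMod.castHom_apply]
    have hsum : ∑ l, (u l).val • v l = ψ u := by
      show _ = ∑ l, χ (u l) * v l
      exact Finset.sum_congr rfl fun l _ => hterm l
    show (∑ l, (u l).val • v l = 0) ↔ _
    rw [hsum]
  let Φ : (Fin (2 ^ (r - 1)) → ZMod 2) →ₗ[ZMod 2]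
      (Fin (2 ^ (r - 1)) → ZMod 2) →ₗ[ZMod 2] ZMod 2 :=
    LinearMap.mk₂ (ZMod 2) (fun w u => ∑ l, w l * u l)
      (fun w w' u => by simp [add_mul, Finset.sum_add_distrib])
      (fun c w u => by simp [Finset.mul_sum, mul_assoc])
      (fun w u u' => by simp [mul_add, Finset.sum_add_distrib])
      (fun c w u => by simp [Finset.mul_sum, mul_left_comm])
  have hΦapp : ∀ w u : Fin (2 ^ (r - 1)) → ZMod 2, Φ w u = ∑ l, w l * u l := fun w u => rfl
  have hsingle : ∀ (w : Fin (2 ^ (r - 1)) → ZMod 2) (l : Fin (2 ^ (r - 1))),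
      ∑ m, w m * (Pi.single l 1 : Fin (2 ^ (r - 1)) → ZMod 2) m = w l := by
    intro w l
    rw [Finset.sum_eq_single l]
    · rw [Pi.single_eq_same, mul_one]
    · intro m _ hm
      rw [Pi.single_eq_of_ne hm, mul_zero]
    · intro h
      exact absurd (Finset.mem_univ l) h
  have hΦinj : Function.Injective Φ := by
    intro w w' h
    funext l
    have h1 := congrArg (fun φ => φ ((Pi.single l 1 : Fin (2 ^ (r - 1)) → ZMod 2))) h
    rw [hΦapp, hΦapp, hsingle, hsingle] at h1
    exact h1
  set C : Submodule (ZMod 2) (Fin (2 ^ (r - 1)) → ZMod 2) := LinearMap.ker ψ with hC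
  have hmap : ∀ w ∈ dualSet v, Φ w ∈ C.dualAnnihilator := by
    intro w hw
    rw [Submodule.mem_dualAnnihilator]
    intro u hu
    rw [hΦapp]
    exact hw u ((hψmem u).mpr (LinearMap.mem_ker.mp hu))
  let eqa := Subspace.quotEquivAnnihilator C
  haveI hfinq : Finite ((Fin (2 ^ (r - 1)) → ZMod 2) ⧸ C) := Quotient.finite _
  haveI hfinann : Finite C.dualAnnihilator := Finite.of_equiv _ eqa.toEquiv
  have hcard_le : Nat.card (dualSet v) ≤ 2 ^ r := by
    have e1 : Nat.card (dualSet v) ≤ Nat.card C.dualAnnihilator := by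
      apply Nat.card_le_card_of_injective
        (fun w : dualSet v => (⟨Φ w.1, hmap w.1 w.2⟩ : C.dualAnnihilator))
      intro w w' h
      exact Subtype.ext (hΦinj (congrArg Subtype.val h))
    have e2 : Nat.card C.dualAnnihilator = Nat.card ((Fin (2 ^ (r - 1)) → ZMod 2) ⧸ C) :=
      (Nat.card_congr eqa.toEquiv).symm
    have e3 : Nat.card ((Fin (2 ^ (r - 1)) → ZMod 2) ⧸ C) = Nat.card (LinearMap.range ψ) :=
      Nat.card_congr (LinearMap.quotKerEquivRange ψ).toEquiv
    have e4 : Nat.card (LinearMap.range ψ) ≤ 2 ^ r := by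
      have h5 := Nat.card_le_card_of_injective
        (Subtype.val : LinearMap.range ψ → F) Subtype.val_injective
      rwa [Nat.card_eq_fintype_card (α := F), hF] at h5
    exact e1.trans (by rw [e2, e3]; exact e4)
  have hrange_card : Nat.card (Set.range (cw r v)) = 2 ^ r := by
    rw [Nat.card_range_of_injective hinj, Nat.card_eq_fintype_card, hF]
  have hset : Set.range (cw r v) = dualSet v := by
    apply Set.eq_of_subset_of_ncard_le hsub1
    rw [← Nat.card_coe_set_eq, ← Nat.card_coe_set_eq, hrange_card]
    exact hcard_le
  exact ⟨hinj, hadd, hset, by rw [← hset]; exact hrange_card⟩
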